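/- Consider a mapping F : ℝ^n ⇒ ℝ^n and let (x̄, ȳ) ∈ gph F. Then F is strongly metrically subregular around (x̄, ȳ) if and only if the implication ((u, 0) ∈ gph D^♯F(x̄, ȳ) ⟹ u = 0) holds; and in this case lsubreg F(x̄, ȳ) = sup{‖u‖ : (u, v) ∈ gph D^♯F(x̄, ȳ), ‖v‖ ≤ 1}. -/

import Mathlib

open Filter Topology Metric Set
open scoped InnerProductSpace RealInnerProductSpace ENNReal NNReal

noncomputable section

namespace SCD

abbrev E (n : ℕ) := EuclideanSpace ℝ (Fin n)
abbrev E2 (n : ℕ) := WithLp 2 (E n × E n)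

variable {n : ℕ}

def lp2 (n : ℕ) : E2 n ≃ₗ[ℝ] E n × E n := WithLp.linearEquiv 2 ℝ (E n × E n)
def mk2 (u v : E n) : E2 n := (lp2 n).symm (u, v)
def fst2 (z : E2 n) : E n := (lp2 n z).1
def snd2 (z : E2 n) : E n := (lp2 n z).2

instance : FiniteDimensional ℝ (E2 n) := Module.Finite.equiv (lp2 n).symm

def tcone {H : Type*} [NormedAddCommGroup H] [NormedSpace ℝ H] (A : Set H) (z : H) : Set H :=
  {w | ∃ t : ℕ → ℝ, ∃ wk : ℕ → H, (∀ k, 0 < t k) ∧ Tendsto t atTop (𝓝 0) ∧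
      Tendsto wk atTop (𝓝 w) ∧ ∀ k, z + t k • wk k ∈ A}

def gph (F : E n → Set (E n)) : Set (E2 n) := {z | snd2 z ∈ F (fst2 z)}
def projC (L : Submodule ℝ (E2 n)) : E2 n →L[ℝ] E2 n := L.subtypeL.comp (L.orthogonalProjectionOnto)
def dZ (L₁ L₂ : Submodule ℝ (E2 n)) : ℝ := ‖projC L₁ - projC L₂‖

def Sneg (n : ℕ) : E2 n ≃ₗ[ℝ] E2 n :=
  (lp2 n).trans (((LinearEquiv.prodComm ℝ (E n) (E n)).trans
    ((LinearEquiv.neg ℝ).prodCongr (LinearEquiv.refl ℝ (E n)))).trans (lp2 n).symm)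

def adjS (L : Submodule ℝ (E2 n)) : Submodule ℝ (E2 n) := Lᗮ.map (Sneg n).toLinearMap

/-- `O_F`: the set of points of `gph F` where `F` is graphically smooth of dimension `n`,
i.e. the tangent cone to the graph is an `n`-dimensional linear subspace. -/
def OF (F : E n → Set (E n)) : Set (E2 n) :=
  {z | z ∈ gph F ∧ ∃ L : Submodule ℝ (E2 n),
    Module.finrank ℝ L = n ∧ (L : Set (E2 n)) = tcone (gph F) z}

/-- The primal generalized derivative `Sp F(x,y)`. -/
def Sp (F : E n → Set (E n)) (z : E2 n) : Set (Submodule ℝ (E2 n)) :=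
  {L | Module.finrank ℝ L = n ∧ ∃ (zk : ℕ → E2 n) (Lk : ℕ → Submodule ℝ (E2 n)),
      (∀ k, zk k ∈ gph F ∧ Module.finrank ℝ (Lk k) = n ∧
        ((Lk k : Set (E2 n)) = tcone (gph F) (zk k))) ∧
      Tendsto zk atTop (𝓝 z) ∧ Tendsto (fun k => dZ (Lk k) L) atTop (𝓝 0)}

/-- The dual generalized derivative `Sp* F(x,y)`. -/
def SpStar (F : E n → Set (E n)) (z : E2 n) : Set (Submodule ℝ (E2 n)) :=
  {L' | ∃ L ∈ Sp F z, L' = adjS L}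

/-- `F` has the SCD property at `z ∈ gph F`. -/
def SCDAt (F : E n → Set (E n)) (z : E2 n) : Prop := (Sp F z).Nonempty

/-- `F` has the SCD property around `z ∈ gph F`. -/
def SCDAround (F : E n → Set (E n)) (z : E2 n) : Prop :=
  ∃ δ > (0 : ℝ), ∀ z' ∈ gph F, dist z' z < δ → SCDAt F z'

/-- `Z_n^{reg}`: the subspaces `L ∈ Z_n` such that `(y*, 0) ∈ L` implies `y* = 0`. -/
def Znreg (n : ℕ) : Set (Submodule ℝ (E2 n)) :=
  {L | Module.finrank ℝ L = n ∧ ∀ y : E n, mk2 y 0 ∈ L → y = 0}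

/-- `F` is SCD regular around `z ∈ gph F`. -/
def SCDRegularAround (F : E n → Set (E n)) (z : E2 n) : Prop :=
  SCDAround F z ∧ ∀ L ∈ SpStar F z, L ∈ Znreg n

/-- The set of values `‖y*‖` for `(y*, x*)` in some `L ∈ Sp* F(x,y)` with `‖x*‖ ≤ 1`;
its supremum is the modulus of SCD regularity. -/
def scdregSet (F : E n → Set (E n)) (z : E2 n) : Set ℝ :=
  {r | ∃ L ∈ SpStar F z, ∃ w : E2 n, w ∈ L ∧ ‖snd2 w‖ ≤ 1 ∧ r = ‖fst2 w‖}

/-- The modulus of SCD regularity `scd reg F(x,y)`. -/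
def scdreg (F : E n → Set (E n)) (z : E2 n) : ℝ := sSup (scdregSet F z)

/-- The graph of the outer limiting graphical derivative `D^♯F(x̄,ȳ)`. -/
def DsharpG (F : E n → Set (E n)) (z : E2 n) : Set (E2 n) :=
  {w | ∃ (zk : ℕ → E2 n) (wk : ℕ → E2 n),
    (∀ k, zk k ∈ gph F ∧ wk k ∈ tcone (gph F) (zk k)) ∧
    Tendsto zk atTop (𝓝 z) ∧ Tendsto wk atTop (𝓝 w)}

/-- The regular (Fréchet) normal cone: the polar of the tangent cone. -/
def regN (A : Set (E2 n)) (z : E2 n) : Set (E2 n) := {w | ∀ v ∈ tcone A z, ⟪w, v⟫_ℝ ≤ 0}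

/-- The limiting (Mordukhovich) normal cone. -/
def limN (A : Set (E2 n)) (z : E2 n) : Set (E2 n) :=
  {w | ∃ (zk wk : ℕ → E2 n), (∀ k, zk k ∈ A ∧ wk k ∈ regN A (zk k)) ∧
    Tendsto zk atTop (𝓝 z) ∧ Tendsto wk atTop (𝓝 w)}

/-- The graph of the limiting coderivative: `(y*, x*)` with `(x*, -y*)` in the limiting
normal cone to the graph. -/
def coderivG (F : E n → Set (E n)) (z : E2 n) : Set (E2 n) :=
  {w | mk2 (snd2 w) (-(fst2 w)) ∈ limN (gph F) z}

/-- The graph of the strict (paratingent) derivative `D_*F(x̄,ȳ)`. -/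
def paraconeG (F : E n → Set (E n)) (z : E2 n) : Set (E2 n) :=
  {w | ∃ (t : ℕ → ℝ) (z1 z2 : ℕ → E2 n), (∀ k, 0 < t k) ∧ Tendsto t atTop (𝓝 0) ∧
    (∀ k, z1 k ∈ gph F ∧ z2 k ∈ gph F) ∧ Tendsto z1 atTop (𝓝 z) ∧ Tendsto z2 atTop (𝓝 z) ∧
    Tendsto (fun k => (t k)⁻¹ • (z2 k - z1 k)) atTop (𝓝 w)}

/-- The B-subdifferential of `f : U → ℝ^n` at `x`. -/
def Bsub (f : E n → E n) (U : Set (E n)) (x : E n) : Set (E n →L[ℝ] E n) :=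
  {A | ∃ xk : ℕ → E n, (∀ k, xk k ∈ U ∧ DifferentiableAt ℝ f (xk k)) ∧
    Tendsto xk atTop (𝓝 x) ∧ Tendsto (fun k => fderiv ℝ f (xk k)) atTop (𝓝 A)}

/-- A single-valued map `f` on `U` viewed as a set-valued map. -/
def sv (f : E n → E n) (U : Set (E n)) : E n → Set (E n) := fun x => {y | x ∈ U ∧ y = f x}

/-- The linear map `u ↦ (u, A u)`. -/
def graphMap (A : E n →L[ℝ] E n) : E n →ₗ[ℝ] E2 n :=
  (lp2 n).symm.toLinearMap.comp (LinearMap.prod LinearMap.id A.toLinearMap)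

/-- The subspace `rge(I, A) = {(u, Au) : u ∈ ℝ^n}`. -/
def rgeIA (A : E n →L[ℝ] E n) : Submodule ℝ (E2 n) := LinearMap.range (graphMap A)

/-- The linear map `p ↦ (C p, p)`. -/
def graphMapRev (C : E n →L[ℝ] E n) : E n →ₗ[ℝ] E2 n :=
  (lp2 n).symm.toLinearMap.comp (LinearMap.prod C.toLinearMap LinearMap.id)

/-- The subspace `rge(C, I) = {(C p, p) : p ∈ ℝ^n}`. -/
def rgeCI (C : E n →L[ℝ] E n) : Submodule ℝ (E2 n) := LinearMap.range (graphMapRev C)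

/-- The preimage map `F^{-1}(y)`. -/
def Finv (F : E n → Set (E n)) (y : E n) : Set (E n) := {x | y ∈ F x}

/-- Metric subregularity at `z ∈ gph F` with constant `κ`. -/
def SubregWith (F : E n → Set (E n)) (z : E2 n) (κ : ℝ) : Prop :=
  ∃ δ > (0 : ℝ), ∀ x' : E n, dist x' (fst2 z) < δ →
    EMetric.infEdist x' (Finv F (snd2 z)) ≤ ENNReal.ofReal κ * EMetric.infEdist (snd2 z) (F x')

/-- `F` is metrically subregular at `z ∈ gph F`. -/
def SubregAt (F : E n → Set (E n)) (z : E2 n) : Prop := ∃ κ, 0 ≤ κ ∧ SubregWith F z κ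

/-- The modulus of metric subregularity `subreg F(x,y)`. -/
def subregMod (F : E n → Set (E n)) (z : E2 n) : ℝ := sInf {κ | 0 ≤ κ ∧ SubregWith F z κ}

/-- `F` is strongly metrically subregular at `z ∈ gph F`. -/
def StrSubregAt (F : E n → Set (E n)) (z : E2 n) : Prop :=
  SubregAt F z ∧ ∃ δ > (0 : ℝ), ∀ x' ∈ Finv F (snd2 z), dist x' (fst2 z) < δ → x' = fst2 z

/-- `F` is strongly metrically subregular around `zb ∈ gph F` (with finite `lsubreg`). -/
def StrSubregAround (F : E n → Set (E n)) (zb : E2 n) : Prop :=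
  ∃ δ > (0 : ℝ), (∀ z ∈ gph F, dist z zb < δ → StrSubregAt F z) ∧
    ∃ c : ℝ, ∀ z ∈ gph F, dist z zb < δ → subregMod F z ≤ c

/-- `lsubreg F(x̄,ȳ)`: the limsup of `subreg F(x,y)` over graph points `(x,y) → (x̄,ȳ)`. -/
def lsubreg (F : E n → Set (E n)) (zb : E2 n) : ℝ :=
  Filter.limsup (fun z => subregMod F z) (𝓝[gph F] zb)

/-- Metric regularity around `zb ∈ gph F` with constant `κ`. -/
def RegWith (F : E n → Set (E n)) (zb : E2 n) (κ : ℝ) : Prop :=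
  ∃ δ > (0 : ℝ), ∀ x y : E n, dist x (fst2 zb) < δ → dist y (snd2 zb) < δ →
    EMetric.infEdist x (Finv F y) ≤ ENNReal.ofReal κ * EMetric.infEdist y (F x)

/-- `F` is metrically regular around `zb ∈ gph F`. -/
def MetrRegAround (F : E n → Set (E n)) (zb : E2 n) : Prop := ∃ κ, 0 ≤ κ ∧ RegWith F zb κ

/-- The modulus of metric regularity `reg F(x̄,ȳ)`. -/
def regMod (F : E n → Set (E n)) (zb : E2 n) : ℝ := sInf {κ | 0 ≤ κ ∧ RegWith F zb κ}

/-- `F` is strongly metrically regular around `zb ∈ gph F`: metrically regular and `F⁻¹`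
has a single-valued localization around `(ȳ, x̄)`. -/
def StrRegAround (F : E n → Set (E n)) (zb : E2 n) : Prop :=
  MetrRegAround F zb ∧
  ∃ (X' Y' : Set (E n)) (h : E n → E n), IsOpen X' ∧ IsOpen Y' ∧
    fst2 zb ∈ X' ∧ snd2 zb ∈ Y' ∧ h (snd2 zb) = fst2 zb ∧
    gph F ∩ {w | fst2 w ∈ X' ∧ snd2 w ∈ Y'} = {w | snd2 w ∈ Y' ∧ fst2 w = h (snd2 w)}

/-- `F` is SCD semismooth* at `zb ∈ gph F`. -/
def SCDSemismoothAt (F : E n → Set (E n)) (zb : E2 n) : Prop :=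
  SCDAround F zb ∧ ∀ ε > (0 : ℝ), ∃ δ > (0 : ℝ), ∀ z ∈ gph F, dist z zb ≤ δ →
    ∀ L ∈ SpStar F z, ∀ w : E2 n, w ∈ L →
      |⟪snd2 w, fst2 z - fst2 zb⟫_ℝ - ⟪fst2 w, snd2 z - snd2 zb⟫_ℝ| ≤ ε * ‖z - zb‖ * ‖w‖

/-- `F` is graphically Lipschitzian of dimension `n` at `zb` with transformation mapping `Φ`,
local inverse `Ψ`, neighborhood `W`, and `K`-Lipschitz map `f : U → ℝ^n`. -/
def GraphLipWith (F : E n → Set (E n)) (zb : E2 n) (Φ Ψ : E2 n → E2 n)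
    (W : Set (E2 n)) (U : Set (E n)) (f : E n → E n) (K : ℝ≥0) : Prop :=
  IsOpen W ∧ zb ∈ W ∧ ContDiffOn ℝ 1 Φ W ∧ Set.InjOn Φ W ∧ IsOpen (Φ '' W) ∧
  ContDiffOn ℝ 1 Ψ (Φ '' W) ∧ Set.LeftInvOn Ψ Φ W ∧
  IsOpen U ∧ LipschitzOnWith K f U ∧
  Φ '' (gph F ∩ W) = {w | fst2 w ∈ U ∧ snd2 w = f (fst2 w)}

/-- `F` is graphically Lipschitzian of dimension `n` at `zb` with transformation mapping `Φ`. -/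
def GraphLipAt (F : E n → Set (E n)) (zb : E2 n) (Φ : E2 n → E2 n) : Prop :=
  ∃ Ψ W U f K, GraphLipWith F zb Φ Ψ W U f K

/-- `∇̄^Φ F(x̄,ȳ)`: the `(2n)×n` matrices `Z` (as linear maps `ℝ^n → ℝ^{2n}`) with
`rge Z ∈ Sp F(x̄,ȳ)` and upper block of `∇Φ(x̄,ȳ)Z` equal to the identity. -/
def BsubPhi (F : E n → Set (E n)) (zb : E2 n) (Φ : E2 n → E2 n) : Set (E n →L[ℝ] E2 n) :=
  {Z | LinearMap.range (Z : E n →ₗ[ℝ] E2 n) ∈ Sp F zb ∧ ∀ p, fst2 (fderiv ℝ Φ zb (Z p)) = p}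

/-- A (globally) monotone set-valued map. -/
def MonoMap (T : E n → Set (E n)) : Prop :=
  ∀ x₁ y₁ x₂ y₂, y₁ ∈ T x₁ → y₂ ∈ T x₂ → 0 ≤ ⟪y₁ - y₂, x₁ - x₂⟫_ℝ

/-- `F` is locally maximally monotone at `z ∈ gph F`. -/
def LocMaxMonoAt (F : E n → Set (E n)) (z : E2 n) : Prop :=
  ∃ X Y : Set (E n), IsOpen X ∧ IsOpen Y ∧ fst2 z ∈ X ∧ snd2 z ∈ Y ∧
    (∀ w₁ ∈ gph F ∩ {w | fst2 w ∈ X ∧ snd2 w ∈ Y},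
     ∀ w₂ ∈ gph F ∩ {w | fst2 w ∈ X ∧ snd2 w ∈ Y},
       0 ≤ ⟪snd2 w₁ - snd2 w₂, fst2 w₁ - fst2 w₂⟫_ℝ) ∧
    ∀ T : E n → Set (E n), MonoMap T →
      gph F ∩ {w | fst2 w ∈ X ∧ snd2 w ∈ Y} ⊆ gph T →
      gph F ∩ {w | fst2 w ∈ X ∧ snd2 w ∈ Y} = gph T ∩ {w | fst2 w ∈ X ∧ snd2 w ∈ Y}

/-- `F` is locally maximally hypomonotone at `z ∈ gph F`:
`γI + F` is locally maximally monotone at `(x, γx + y)` for some `γ ≥ 0`. -/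
def LocMaxHypoAt (F : E n → Set (E n)) (z : E2 n) : Prop :=
  ∃ γ : ℝ, 0 ≤ γ ∧ LocMaxMonoAt (fun x => (fun y => γ • x + y) '' F x)
    (mk2 (fst2 z) (γ • fst2 z + snd2 z))

/-- A firmly nonexpansive matrix: `⟨Bv, v⟩ ≥ ‖Bv‖²` for all `v`. -/
def FirmNonexp (B : E n →L[ℝ] E n) : Prop := ∀ v, ‖B v‖ ^ 2 ≤ ⟪B v, v⟫_ℝ


/- ============ basic API ============ -/

lemma fst2_mk2 (u v : E n) : fst2 (mk2 u v) = u := rfl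
lemma snd2_mk2 (u v : E n) : snd2 (mk2 u v) = v := rfl
lemma mk2_fst2_snd2 (z : E2 n) : mk2 (fst2 z) (snd2 z) = z := rfl
lemma fst2_add (z w : E2 n) : fst2 (z + w) = fst2 z + fst2 w := rfl
lemma snd2_add (z w : E2 n) : snd2 (z + w) = snd2 z + snd2 w := rfl
lemma fst2_smul (t : ℝ) (z : E2 n) : fst2 (t • z) = t • fst2 z := rfl
lemma snd2_smul (t : ℝ) (z : E2 n) : snd2 (t • z) = t • snd2 z := rfl
lemma fst2_zero : fst2 (0 : E2 n) = 0 := rfl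
lemma snd2_zero : snd2 (0 : E2 n) = 0 := rfl

lemma norm_sq2 (z : E2 n) : ‖z‖^2 = ‖fst2 z‖^2 + ‖snd2 z‖^2 := WithLp.prod_norm_sq_eq_of_L2 z

lemma norm_fst2_le (z : E2 n) : ‖fst2 z‖ ≤ ‖z‖ := by
  nlinarith [norm_sq2 z, norm_nonneg z, norm_nonneg (fst2 z), sq_nonneg (‖snd2 z‖)]

lemma norm_snd2_le (z : E2 n) : ‖snd2 z‖ ≤ ‖z‖ := by
  nlinarith [norm_sq2 z, norm_nonneg z, norm_nonneg (snd2 z), sq_nonneg (‖fst2 z‖)]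

lemma norm_le_add2 (z : E2 n) : ‖z‖ ≤ ‖fst2 z‖ + ‖snd2 z‖ := by
  nlinarith [norm_sq2 z, norm_nonneg z, norm_nonneg (fst2 z), norm_nonneg (snd2 z),
    mul_nonneg (norm_nonneg (fst2 z)) (norm_nonneg (snd2 z))]

lemma continuous_fst2 : Continuous (fst2 : E2 n → E n) :=
  continuous_fst.comp (WithLp.prod_continuous_ofLp 2 (E n) (E n))

lemma continuous_snd2 : Continuous (snd2 : E2 n → E n) :=
  continuous_snd.comp (WithLp.prod_continuous_ofLp 2 (E n) (E n))

lemma mem_gph {F : E n → Set (E n)} {x y : E n} : mk2 x y ∈ gph F ↔ y ∈ F x := Iff.rfl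

lemma e2_ext {a b : E2 n} (h1 : fst2 a = fst2 b) (h2 : snd2 a = snd2 b) : a = b := by
  rw [← mk2_fst2_snd2 a, ← mk2_fst2_snd2 b, h1, h2]

lemma mk2_eq_zero_iff {u v : E n} : mk2 u v = 0 ↔ u = 0 ∧ v = 0 := by
  constructor
  · intro h
    have h1 : fst2 (mk2 u v) = fst2 (0 : E2 n) := by rw [h]
    have h2 : snd2 (mk2 u v) = snd2 (0 : E2 n) := by rw [h]
    exact ⟨h1, h2⟩
  · rintro ⟨rfl, rfl⟩; rfl

/- ============ cone lemmas ============ -/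

lemma tcone_smul_mem {H : Type*} [NormedAddCommGroup H] [NormedSpace ℝ H] {A : Set H} {z w : H}
    (hw : w ∈ tcone A z) {s : ℝ} (hs : 0 < s) : s • w ∈ tcone A z := by
  obtain ⟨t, wk, ht, ht0, hwk, hA⟩ := hw
  refine ⟨fun k => t k / s, fun k => s • wk k, fun k => div_pos (ht k) hs, ?_, ?_, fun k => ?_⟩
  · simpa using ht0.div_const s
  · exact hwk.const_smul s
  · have : (t k / s) • (s • wk k) = t k • wk k := by
      rw [smul_smul, div_mul_cancel₀ _ hs.ne']
    rw [this]; exact hA k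

lemma tendsto_one_div_nat : Tendsto (fun k : ℕ => 1 / ((k : ℝ) + 1)) atTop (𝓝 0) :=
  tendsto_one_div_add_atTop_nhds_zero_nat

lemma zero_mem_tcone {H : Type*} [NormedAddCommGroup H] [NormedSpace ℝ H] {A : Set H} {z : H}
    (hz : z ∈ A) : (0 : H) ∈ tcone A z := by
  refine ⟨fun k => 1 / ((k : ℝ) + 1), fun _ => 0, fun k => by positivity, tendsto_one_div_nat,
    tendsto_const_nhds, fun k => by simpa using hz⟩

lemma DsharpG_smul {F : E n → Set (E n)} {zb w : E2 n} (hw : w ∈ DsharpG F zb) {s : ℝ}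
    (hs : 0 < s) : s • w ∈ DsharpG F zb := by
  obtain ⟨zk, wk, h, hz, hwk⟩ := hw
  exact ⟨zk, fun k => s • wk k, fun k => ⟨(h k).1, tcone_smul_mem (h k).2 hs⟩, hz,
    hwk.const_smul s⟩

lemma zero_mem_DsharpG {F : E n → Set (E n)} {zb : E2 n} (hzb : zb ∈ gph F) :
    (0 : E2 n) ∈ DsharpG F zb :=
  ⟨fun _ => zb, fun _ => 0, fun _ => ⟨hzb, zero_mem_tcone hzb⟩, tendsto_const_nhds,
    tendsto_const_nhds⟩

/- ============ extraction ============ -/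

lemma subseq_dist_tendsto {zk : ℕ → E2 n} {zb : E2 n} {φ : ℕ → ℕ} (hφ : StrictMono φ)
    (h : ∀ k : ℕ, dist (zk k) zb < 1 / ((k : ℝ) + 1)) :
    Tendsto (zk ∘ φ) atTop (𝓝 zb) := by
  rw [tendsto_iff_dist_tendsto_zero]
  refine squeeze_zero (fun k => dist_nonneg) (fun k => ?_) tendsto_one_div_nat
  refine le_trans (h (φ k)).le ?_
  refine one_div_le_one_div_of_le (by positivity) ?_
  have := hφ.le_apply (x := k)
  exact_mod_cast by exact_mod_cast add_le_add_left (Nat.cast_le.mpr this) 1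

lemma extract (F : E n → Set (E n)) (zb : E2 n) (c : ℕ → ℝ) (hc : ∀ k, 0 ≤ c k)
    (h : ∀ k : ℕ, ∃ z ∈ gph F, dist z zb < 1 / ((k : ℝ) + 1) ∧
      ∃ w ∈ tcone (gph F) z, c k * ‖snd2 w‖ < ‖fst2 w‖) :
    ∃ w ∈ DsharpG F zb, ‖w‖ = 1 ∧ ∃ v : ℕ → E2 n, ∃ φ : ℕ → ℕ, StrictMono φ ∧
      Tendsto v atTop (𝓝 w) ∧ ∀ k, ‖v k‖ = 1 ∧ c (φ k) * ‖snd2 (v k)‖ < ‖fst2 (v k)‖ := by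
  choose z hzF hzd w hw hlt using h
  have hwne : ∀ k, w k ≠ 0 := by
    intro k hk
    have := hlt k
    rw [hk] at this
    simp [fst2_zero, snd2_zero] at this
  set v : ℕ → E2 n := fun k => ‖w k‖⁻¹ • w k with hv
  have hvnorm : ∀ k, ‖v k‖ = 1 := by
    intro k
    rw [hv]
    simp only [norm_smul, norm_inv, norm_norm]
    rw [inv_mul_cancel₀ (norm_ne_zero_iff.mpr (hwne k))]
  have hvt : ∀ k, v k ∈ tcone (gph F) (z k) := fun k =>
    tcone_smul_mem (hw k) (inv_pos.mpr (norm_pos_iff.mpr (hwne k)))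
  have hvlt : ∀ k, c k * ‖snd2 (v k)‖ < ‖fst2 (v k)‖ := by
    intro k
    have hpos : (0:ℝ) < ‖w k‖⁻¹ := inv_pos.mpr (norm_pos_iff.mpr (hwne k))
    rw [hv]
    simp only [fst2_smul, snd2_smul, norm_smul, norm_inv, norm_norm]
    rw [mul_left_comm]
    exact mul_lt_mul_of_pos_left (hlt k) hpos
  have hsph : ∀ k, v k ∈ sphere (0 : E2 n) 1 := by
    intro k; rw [mem_sphere_zero_iff_norm]; exact hvnorm k
  obtain ⟨wl, hwl, φ, hφ, hconv⟩ := (isCompact_sphere (0 : E2 n) 1).tendsto_subseq hsph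
  refine ⟨wl, ⟨z ∘ φ, v ∘ φ, fun k => ⟨hzF (φ k), hvt (φ k)⟩,
    subseq_dist_tendsto hφ hzd, hconv⟩, mem_sphere_zero_iff_norm.mp hwl,
    v ∘ φ, φ, hφ, hconv, fun k => ⟨hvnorm (φ k), hvlt (φ k)⟩⟩

/- ============ uniform bound lemmas ============ -/

lemma tendsto_norm_fst2 {wk : ℕ → E2 n} {w : E2 n} (h : Tendsto wk atTop (𝓝 w)) :
    Tendsto (fun k => ‖fst2 (wk k)‖) atTop (𝓝 ‖fst2 w‖) :=
  ((continuous_fst2.norm).tendsto w).comp h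

lemma tendsto_norm_snd2 {wk : ℕ → E2 n} {w : E2 n} (h : Tendsto wk atTop (𝓝 w)) :
    Tendsto (fun k => ‖snd2 (wk k)‖) atTop (𝓝 ‖snd2 w‖) :=
  ((continuous_snd2.norm).tendsto w).comp h

/-- Lemma A: crude uniform tangent bound near `zb`. -/
lemma lemA {F : E n → Set (E n)} {zb : E2 n}
    (H : ∀ u : E n, mk2 u 0 ∈ DsharpG F zb → u = 0) :
    ∃ c : ℝ, 0 ≤ c ∧ ∃ δ > (0:ℝ), ∀ z ∈ gph F, dist z zb < δ →
      ∀ w ∈ tcone (gph F) z, ‖fst2 w‖ ≤ c * ‖snd2 w‖ := by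
  by_contra hcon
  push_neg at hcon
  have h : ∀ k : ℕ, ∃ z ∈ gph F, dist z zb < 1 / ((k : ℝ) + 1) ∧
      ∃ w ∈ tcone (gph F) z, ((k : ℝ) + 1) * ‖snd2 w‖ < ‖fst2 w‖ := by
    intro k
    obtain ⟨z, hz, hzd, w, hw, hlt⟩ := hcon ((k : ℝ) + 1) (by positivity)
      (1 / ((k : ℝ) + 1)) (by positivity)
    exact ⟨z, hz, hzd, w, hw, hlt⟩
  obtain ⟨w, hwD, hwn, v, φ, hφ, hconv, hvp⟩ := extract F zb (fun k => (k : ℝ) + 1)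
    (fun k => by positivity) h
  -- snd2 w = 0
  have hsnd : snd2 w = 0 := by
    have hb : ∀ k, ‖snd2 (v k)‖ ≤ 1 / ((k : ℝ) + 1) := by
      intro k
      have h1 := (hvp k).2
      have h2 : ‖fst2 (v k)‖ ≤ 1 := by rw [← (hvp k).1]; exact norm_fst2_le _
      have h3 : ((k : ℝ) + 1) ≤ ((φ k : ℝ) + 1) := by
        have := hφ.le_apply (x := k)
        have : (k:ℝ) ≤ (φ k : ℝ) := Nat.cast_le.mpr this
        linarith
      have h4 : ((k : ℝ) + 1) * ‖snd2 (v k)‖ ≤ ((φ k : ℝ) + 1) * ‖snd2 (v k)‖ :=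
        mul_le_mul_of_nonneg_right h3 (norm_nonneg _)
      rw [le_div_iff₀ (by positivity : (0:ℝ) < (k : ℝ) + 1)]
      nlinarith
    have : Tendsto (fun k => snd2 (v k)) atTop (𝓝 0) :=
      squeeze_zero_norm hb tendsto_one_div_nat
    exact tendsto_nhds_unique ((continuous_snd2.tendsto w).comp hconv) this
  have hfst : fst2 w = 0 := by
    apply H
    have : mk2 (fst2 w) 0 = w := by rw [← hsnd, mk2_fst2_snd2]
    rw [this]; exact hwD
  have : w = 0 := by rw [← mk2_fst2_snd2 w, hfst, hsnd]; rfl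
  rw [this] at hwn; simp at hwn

/-- Lemma A': uniform tangent bound implies bound on the outer limiting derivative. -/
lemma lemA' {F : E n → Set (E n)} {zb : E2 n} {c δ : ℝ} (hδ : 0 < δ)
    (hb : ∀ z ∈ gph F, dist z zb < δ → ∀ w ∈ tcone (gph F) z, ‖fst2 w‖ ≤ c * ‖snd2 w‖) :
    ∀ w ∈ DsharpG F zb, ‖fst2 w‖ ≤ c * ‖snd2 w‖ := by
  rintro w ⟨zk, wk, hk, hz, hw⟩
  have hev : ∀ᶠ k in atTop, ‖fst2 (wk k)‖ ≤ c * ‖snd2 (wk k)‖ := by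
    filter_upwards [hz (Metric.ball_mem_nhds zb hδ)] with k hkb
    exact hb (zk k) (hk k).1 (mem_ball.mp hkb) (wk k) (hk k).2
  exact le_of_tendsto_of_tendsto (tendsto_norm_fst2 hw)
    ((tendsto_norm_snd2 hw).const_mul c) hev

/-- Lemma U: sharpened uniform tangent bound. -/
lemma lemU {F : E n → Set (E n)} {zb : E2 n}
    (H : ∀ u : E n, mk2 u 0 ∈ DsharpG F zb → u = 0) {m : ℝ} (hm0 : 0 ≤ m)
    (hub : ∀ w ∈ DsharpG F zb, ‖snd2 w‖ ≤ 1 → ‖fst2 w‖ ≤ m) {ε : ℝ} (hε : 0 < ε) :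
    ∃ δ > (0:ℝ), ∀ z ∈ gph F, dist z zb < δ →
      ∀ w ∈ tcone (gph F) z, ‖fst2 w‖ ≤ (m + ε) * ‖snd2 w‖ := by
  by_contra hcon
  push_neg at hcon
  have h : ∀ k : ℕ, ∃ z ∈ gph F, dist z zb < 1 / ((k : ℝ) + 1) ∧
      ∃ w ∈ tcone (gph F) z, (m + ε) * ‖snd2 w‖ < ‖fst2 w‖ := by
    intro k
    obtain ⟨z, hz, hzd, w, hw, hlt⟩ := hcon (1 / ((k : ℝ) + 1)) (by positivity)
    exact ⟨z, hz, hzd, w, hw, hlt⟩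
  obtain ⟨w, hwD, hwn, v, φ, hφ, hconv, hvp⟩ := extract F zb (fun _ => m + ε)
    (fun _ => by positivity) h
  have hge : (m + ε) * ‖snd2 w‖ ≤ ‖fst2 w‖ := by
    refine le_of_tendsto_of_tendsto ((tendsto_norm_snd2 hconv).const_mul (m+ε))
      (tendsto_norm_fst2 hconv) ?_
    filter_upwards with k using ((hvp k).2).le
  by_cases hs : snd2 w = 0
  · have hfst : fst2 w = 0 := by
      apply H
      have : mk2 (fst2 w) 0 = w := by rw [← hs, mk2_fst2_snd2]
      rw [this]; exact hwD
    have : w = 0 := by rw [← mk2_fst2_snd2 w, hfst, hs]; rfl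
    rw [this] at hwn; simp at hwn
  · have hsp : (0:ℝ) < ‖snd2 w‖ := norm_pos_iff.mpr hs
    have hmem : ‖snd2 w‖⁻¹ • w ∈ DsharpG F zb := DsharpG_smul hwD (inv_pos.mpr hsp)
    have hsnd1 : ‖snd2 (‖snd2 w‖⁻¹ • w)‖ ≤ 1 := by
      simp only [snd2_smul, norm_smul, norm_inv, norm_norm]
      rw [inv_mul_cancel₀ hsp.ne']
    have := hub _ hmem hsnd1
    simp only [fst2_smul, norm_smul, norm_inv, norm_norm] at this
    rw [inv_mul_le_iff₀ hsp] at this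
    nlinarith

/- ============ metric core lemmas ============ -/

lemma subregMod_nonneg (F : E n → Set (E n)) (z : E2 n) : 0 ≤ subregMod F z :=
  Real.sInf_nonneg (fun _ hx => hx.1)

/-- Isolation lower bound on `infEdist`. -/
lemma iso_lb {S : Set (E n)} {x : E n} {δ' : ℝ}
    (hiso : ∀ p ∈ S, dist p x < δ' → p = x) {x' : E n} (hx' : dist x' x < δ' / 2) :
    ENNReal.ofReal (dist x' x) ≤ EMetric.infEdist x' S := by
  refine Metric.le_infEDist.mpr ?_
  intro p hp
  by_cases hc : dist p x < δ'
  · rw [hiso p hp hc, edist_dist]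
  · push_neg at hc
    have h1 : dist x' x ≤ dist x' p := by
      have := dist_triangle p x' x
      have h2 : dist p x' = dist x' p := dist_comm _ _
      linarith [dist_nonneg (x := x') (y := x)]
    rw [edist_dist]
    exact ENNReal.ofReal_le_ofReal h1

/-- Core computation: subregularity + isolation bound tangent vectors. -/
lemma lemC {F : E n → Set (E n)} {z : E2 n} {κ : ℝ} (hκ0 : 0 ≤ κ) (hs : SubregWith F z κ)
    (hiso : ∃ δ' > (0:ℝ), ∀ x' ∈ Finv F (snd2 z), dist x' (fst2 z) < δ' → x' = fst2 z)
    {w : E2 n} (hw : w ∈ tcone (gph F) z) : ‖fst2 w‖ ≤ κ * ‖snd2 w‖ := by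
  obtain ⟨δ, hδ, hsub⟩ := hs
  obtain ⟨δ', hδ', hi⟩ := hiso
  obtain ⟨t, s, ht, ht0, hsw, hA⟩ := hw
  have hev : ∀ᶠ j in atTop, ‖fst2 (s j)‖ ≤ κ * ‖snd2 (s j)‖ := by
    have htend : Tendsto (fun j => t j * ‖fst2 (s j)‖) atTop (𝓝 0) := by
      have := ht0.mul (tendsto_norm_fst2 hsw)
      simpa using this
    have hpos : (0:ℝ) < min δ (δ' / 2) := lt_min hδ (by linarith)
    filter_upwards [htend.eventually_lt_const hpos] with j hj
    set x' := fst2 z + t j • fst2 (s j) with hx'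
    have hd : dist x' (fst2 z) = t j * ‖fst2 (s j)‖ := by
      rw [hx', dist_eq_norm, add_sub_cancel_left, norm_smul, Real.norm_eq_abs,
        abs_of_pos (ht j)]
    have hdδ : dist x' (fst2 z) < δ := by rw [hd]; exact hj.trans_le (min_le_left _ _)
    have hdδ' : dist x' (fst2 z) < δ' / 2 := by rw [hd]; exact hj.trans_le (min_le_right _ _)
    have hyF : snd2 z + t j • snd2 (s j) ∈ F x' := hA j
    have hup : EMetric.infEdist (snd2 z) (F x') ≤ ENNReal.ofReal (t j * ‖snd2 (s j)‖) := by
      refine le_trans (EMetric.infEdist_le_edist_of_mem hyF) ?_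
      rw [edist_dist, dist_eq_norm]
      have : snd2 z - (snd2 z + t j • snd2 (s j)) = -(t j • snd2 (s j)) := by abel
      rw [this, norm_neg, norm_smul, Real.norm_eq_abs, abs_of_pos (ht j)]
    have hlow : ENNReal.ofReal (dist x' (fst2 z)) ≤ EMetric.infEdist x' (Finv F (snd2 z)) :=
      iso_lb hi hdδ'
    have hchain : ENNReal.ofReal (t j * ‖fst2 (s j)‖) ≤
        ENNReal.ofReal (κ * (t j * ‖snd2 (s j)‖)) := by
      rw [← hd, ENNReal.ofReal_mul hκ0]
      exact le_trans hlow (le_trans (hsub x' hdδ)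
        (mul_le_mul_right hup _))
    have hreal : t j * ‖fst2 (s j)‖ ≤ κ * (t j * ‖snd2 (s j)‖) := by
      rw [ENNReal.ofReal_le_ofReal_iff (mul_nonneg hκ0 (mul_nonneg (ht j).le (norm_nonneg _)))] at hchain
      exact hchain
    have : t j * ‖fst2 (s j)‖ ≤ t j * (κ * ‖snd2 (s j)‖) := by linarith [hreal]
    exact le_of_mul_le_mul_left (by linarith) (ht j)
  exact le_of_tendsto_of_tendsto (tendsto_norm_fst2 hsw)
    ((tendsto_norm_snd2 hsw).const_mul κ) hev


/-- Lemma B: pointwise tangent-cone bound gives the strong subregularity estimate. -/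
lemma lemB {F : E n → Set (E n)} {z : E2 n} {c κ : ℝ} (hc : 0 ≤ c) (hκ : c < κ)
    (hb : ∀ w ∈ tcone (gph F) z, ‖fst2 w‖ ≤ c * ‖snd2 w‖) :
    ∃ δ > (0:ℝ), ∀ x' : E n, dist x' (fst2 z) < δ →
      ENNReal.ofReal (dist x' (fst2 z)) ≤
        ENNReal.ofReal κ * EMetric.infEdist (snd2 z) (F x') := by
  have hκ0 : 0 < κ := lt_of_le_of_lt hc hκ
  by_contra hcon
  push_neg at hcon
  have h : ∀ k : ℕ, ∃ x' : E n, dist x' (fst2 z) < 1 / ((k:ℝ)+1) ∧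
      ENNReal.ofReal κ * EMetric.infEdist (snd2 z) (F x') <
        ENNReal.ofReal (dist x' (fst2 z)) := by
    intro k
    obtain ⟨x', h1, h2⟩ := hcon (1 / ((k:ℝ)+1)) (by positivity)
    exact ⟨x', h1, h2⟩
  choose x hxd hxlt using h
  have hdpos : ∀ k, 0 < dist (x k) (fst2 z) := by
    intro k
    rcases eq_or_lt_of_le (dist_nonneg (x := x k) (y := fst2 z)) with h | h
    · exfalso
      have := hxlt k
      rw [← h] at this
      simp at this
    · exact h
  -- choose nearby images
  have hy : ∀ k, ∃ y ∈ F (x k), dist (snd2 z) y < dist (x k) (fst2 z) / κ := by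
    intro k
    have hlt : EMetric.infEdist (snd2 z) (F (x k)) <
        ENNReal.ofReal (dist (x k) (fst2 z) / κ) := by
      by_contra hge
      push_neg at hge
      have : ENNReal.ofReal (dist (x k) (fst2 z)) ≤
          ENNReal.ofReal κ * EMetric.infEdist (snd2 z) (F (x k)) := by
        calc ENNReal.ofReal (dist (x k) (fst2 z))
            = ENNReal.ofReal (κ * (dist (x k) (fst2 z) / κ)) := by
              rw [mul_div_cancel₀ _ hκ0.ne']
          _ = ENNReal.ofReal κ * ENNReal.ofReal (dist (x k) (fst2 z) / κ) :=
              ENNReal.ofReal_mul hκ0.le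
          _ ≤ ENNReal.ofReal κ * EMetric.infEdist (snd2 z) (F (x k)) :=
              mul_le_mul_right hge _
      exact absurd this (not_le.mpr (hxlt k))
    obtain ⟨y, hy, hylt⟩ := EMetric.infEdist_lt_iff.mp hlt
    refine ⟨y, hy, ?_⟩
    rw [edist_dist] at hylt
    exact (ENNReal.ofReal_lt_ofReal_iff (div_pos (hdpos k) hκ0)).mp hylt
  choose y hyF hyd using hy
  set d : ℕ → ℝ := fun k => dist (x k) (fst2 z) with hdd
  set w : ℕ → E2 n := fun k => mk2 ((d k)⁻¹ • (x k - fst2 z)) ((d k)⁻¹ • (y k - snd2 z)) with hw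
  have hwfst : ∀ k, ‖fst2 (w k)‖ = 1 := by
    intro k
    rw [hw]
    simp only [fst2_mk2, norm_smul, Real.norm_eq_abs, abs_of_pos (inv_pos.mpr (hdpos k) : 0 < (d k)⁻¹)]
    rw [← dist_eq_norm]
    exact inv_mul_cancel₀ (hdpos k).ne'
  have hwsnd : ∀ k, ‖snd2 (w k)‖ ≤ 1 / κ := by
    intro k
    rw [hw]
    simp only [snd2_mk2, norm_smul, Real.norm_eq_abs, abs_of_pos (inv_pos.mpr (hdpos k) : 0 < (d k)⁻¹)]
    have h1 : ‖y k - snd2 z‖ < d k / κ := by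
      rw [← dist_eq_norm, dist_comm]; exact hyd k
    rw [inv_mul_le_iff₀ (hdpos k : 0 < d k)]
    rw [mul_one_div]
    exact h1.le
  have hwnorm : ∀ k, ‖w k‖ ≤ 1 + 1 / κ := by
    intro k
    refine le_trans (norm_le_add2 _) ?_
    rw [hwfst k]
    linarith [hwsnd k]
  have hball : ∀ k, w k ∈ closedBall (0 : E2 n) (1 + 1/κ) := by
    intro k; rw [mem_closedBall, dist_zero_right]; exact hwnorm k
  obtain ⟨wl, _, φ, hφ, hconv⟩ := (isCompact_closedBall (0 : E2 n) (1 + 1/κ)).tendsto_subseq hball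
  -- wl ∈ tcone (gph F) z
  have hwl : wl ∈ tcone (gph F) z := by
    refine ⟨d ∘ φ, w ∘ φ, fun k => hdpos (φ k), ?_, hconv, fun k => ?_⟩
    · refine squeeze_zero (fun k => (hdpos (φ k)).le) (fun k => ?_) tendsto_one_div_nat
      refine le_trans (hxd (φ k)).le ?_
      refine one_div_le_one_div_of_le (by positivity) ?_
      have := hφ.le_apply (x := k)
      exact_mod_cast add_le_add_left (Nat.cast_le.mpr this) 1
    · show z + d (φ k) • w (φ k) ∈ gph F
      have hz : z + d (φ k) • w (φ k) = mk2 (x (φ k)) (y (φ k)) := by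
        refine e2_ext ?_ ?_
        · show fst2 z + d (φ k) • ((d (φ k))⁻¹ • (x (φ k) - fst2 z)) = x (φ k)
          rw [smul_smul, mul_inv_cancel₀ (hdpos (φ k)).ne', one_smul]
          abel
        · show snd2 z + d (φ k) • ((d (φ k))⁻¹ • (y (φ k) - snd2 z)) = y (φ k)
          rw [smul_smul, mul_inv_cancel₀ (hdpos (φ k)).ne', one_smul]
          abel
      rw [hz, mem_gph]
      exact hyF (φ k)
  have hble := hb wl hwl
  have hfst1 : ‖fst2 wl‖ = 1 :=
    tendsto_nhds_unique (tendsto_norm_fst2 hconv)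
      (by simpa [hwfst] using (tendsto_const_nhds : Tendsto (fun _ : ℕ => (1:ℝ)) atTop _))
  have hsndb : ‖snd2 wl‖ ≤ 1 / κ :=
    le_of_tendsto (tendsto_norm_snd2 hconv) (Eventually.of_forall (fun k => hwsnd (φ k)))
  rw [hfst1] at hble
  have : c * ‖snd2 wl‖ ≤ c * (1/κ) := mul_le_mul_of_nonneg_left hsndb hc
  have hcκ : c * (1/κ) < 1 := by
    rw [mul_one_div, div_lt_one hκ0]; exact hκ
  linarith

/-- Glue: the estimate of lemB gives strong subregularity and a modulus bound. -/
lemma lemC7 {F : E n → Set (E n)} {z : E2 n} {κ : ℝ} (hz : z ∈ gph F) (hκ : 0 ≤ κ)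
    (h : ∃ δ > (0:ℝ), ∀ x' : E n, dist x' (fst2 z) < δ →
      ENNReal.ofReal (dist x' (fst2 z)) ≤
        ENNReal.ofReal κ * EMetric.infEdist (snd2 z) (F x')) :
    StrSubregAt F z ∧ subregMod F z ≤ κ := by
  obtain ⟨δ, hδ, hest⟩ := h
  have hmem : fst2 z ∈ Finv F (snd2 z) := hz
  have hsw : SubregWith F z κ := by
    refine ⟨δ, hδ, fun x' hx' => ?_⟩
    refine le_trans (le_trans (EMetric.infEdist_le_edist_of_mem hmem) ?_) (hest x' hx')
    rw [edist_dist]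
  have hiso : ∃ δ' > (0:ℝ), ∀ x' ∈ Finv F (snd2 z), dist x' (fst2 z) < δ' → x' = fst2 z := by
    refine ⟨δ, hδ, fun x' hx' hd => ?_⟩
    have h0 : EMetric.infEdist (snd2 z) (F x') = 0 := EMetric.infEdist_zero_of_mem hx'
    have := hest x' hd
    rw [h0, mul_zero, nonpos_iff_eq_zero, ENNReal.ofReal_eq_zero] at this
    rw [← dist_le_zero]
    exact this
  refine ⟨⟨⟨κ, hκ, hsw⟩, hiso⟩, ?_⟩
  exact csInf_le ⟨0, fun x hx => hx.1⟩ ⟨hκ, hsw⟩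


/- ============ main directions ============ -/

/-- Forward: strong subregularity around implies the derivative condition. -/
lemma fwd {F : E n → Set (E n)} {zb : E2 n} (h : StrSubregAround F zb) :
    ∀ u : E n, mk2 u 0 ∈ DsharpG F zb → u = 0 := by
  obtain ⟨δ, hδ, hstr, c, hc⟩ := h
  intro u hu
  obtain ⟨zk, wk, hk, hz, hw⟩ := hu
  have hev : ∀ᶠ k in atTop, ‖fst2 (wk k)‖ ≤ (c+1) * ‖snd2 (wk k)‖ := by
    filter_upwards [hz (Metric.ball_mem_nhds zb hδ)] with k hkb
    have hkb' : dist (zk k) zb < δ := mem_ball.mp hkb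
    obtain ⟨hsub, hiso⟩ := hstr (zk k) (hk k).1 hkb'
    have hmod := hc (zk k) (hk k).1 hkb'
    obtain ⟨κ₀, hκ₀⟩ := hsub
    have hTne : Set.Nonempty {κ | 0 ≤ κ ∧ SubregWith F (zk k) κ} := ⟨κ₀, hκ₀⟩
    obtain ⟨κ, hκT, hκlt⟩ := Real.lt_sInf_add_pos hTne one_pos
    have hκc : κ ≤ c + 1 := by
      have h2 : subregMod F (zk k) ≤ c := hmod
      have h3 : sInf {κ | 0 ≤ κ ∧ SubregWith F (zk k) κ} ≤ c := h2
      linarith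
    calc ‖fst2 (wk k)‖ ≤ κ * ‖snd2 (wk k)‖ := lemC hκT.1 hκT.2 hiso (hk k).2
      _ ≤ (c+1) * ‖snd2 (wk k)‖ := mul_le_mul_of_nonneg_right hκc (norm_nonneg _)
  have hfin := le_of_tendsto_of_tendsto (tendsto_norm_fst2 hw)
    ((tendsto_norm_snd2 hw).const_mul (c+1)) hev
  rw [fst2_mk2, snd2_mk2] at hfin
  simpa using hfin

/-- Backward core: from a bound on the derivative, get uniform strong subregularity. -/
lemma bwd_core {F : E n → Set (E n)} {zb : E2 n}
    (H : ∀ u : E n, mk2 u 0 ∈ DsharpG F zb → u = 0) {m ε : ℝ} (hm : 0 ≤ m)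
    (hub : ∀ w ∈ DsharpG F zb, ‖snd2 w‖ ≤ 1 → ‖fst2 w‖ ≤ m) (hε : 0 < ε) :
    ∃ δ > (0:ℝ), ∀ z ∈ gph F, dist z zb < δ →
      StrSubregAt F z ∧ subregMod F z ≤ m + 2*ε := by
  obtain ⟨δ, hδ, hb⟩ := lemU H hm hub hε
  refine ⟨δ, hδ, fun z hz hzd => ?_⟩
  have h := lemB (c := m + ε) (κ := m + 2*ε) (by linarith) (by linarith) (hb z hz hzd)
  exact lemC7 hz (by linarith) h

/-- Backward: the derivative condition implies strong subregularity around. -/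
lemma bwd {F : E n → Set (E n)} {zb : E2 n} (hzb : zb ∈ gph F)
    (H : ∀ u : E n, mk2 u 0 ∈ DsharpG F zb → u = 0) : StrSubregAround F zb := by
  obtain ⟨c, hc0, δ₀, hδ₀, hA⟩ := lemA H
  have hub : ∀ w ∈ DsharpG F zb, ‖snd2 w‖ ≤ 1 → ‖fst2 w‖ ≤ c := fun w hw hsw =>
    le_trans (lemA' hδ₀ hA w hw) (by nlinarith [norm_nonneg (snd2 w)])
  obtain ⟨δ, hδ, h⟩ := bwd_core H hc0 hub one_pos
  exact ⟨δ, hδ, fun z hz hzd => (h z hz hzd).1, ⟨c + 2*1, fun z hz hzd => (h z hz hzd).2⟩⟩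



/- STATEMENT 15 -/
theorem stmt15 (n : ℕ) (F : E n → Set (E n)) (zb : E2 n) (hzb : zb ∈ gph F) :
    (StrSubregAround F zb ↔ ∀ u : E n, mk2 u 0 ∈ DsharpG F zb → u = 0) ∧
    (StrSubregAround F zb →
      lsubreg F zb = sSup {r | ∃ w ∈ DsharpG F zb, ‖snd2 w‖ ≤ 1 ∧ r = ‖fst2 w‖}) := by
  constructor
  · exact ⟨fun h => fwd h, fun H => bwd hzb H⟩
  · intro hSR
    have H : ∀ u : E n, mk2 u 0 ∈ DsharpG F zb → u = 0 := fwd hSR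
    set S : Set ℝ := {r | ∃ w ∈ DsharpG F zb, ‖snd2 w‖ ≤ 1 ∧ r = ‖fst2 w‖} with hS
    have hS0 : (0:ℝ) ∈ S := ⟨0, zero_mem_DsharpG hzb, by simp [snd2_zero], by simp [fst2_zero]⟩
    obtain ⟨c, hc0, δ₀, hδ₀, hA⟩ := lemA H
    have hDb : ∀ w ∈ DsharpG F zb, ‖fst2 w‖ ≤ c * ‖snd2 w‖ := lemA' hδ₀ hA
    have hSbdd : BddAbove S := by
      refine ⟨c, fun r hr => ?_⟩
      obtain ⟨w, hw, h1, rfl⟩ := hr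
      calc ‖fst2 w‖ ≤ c * ‖snd2 w‖ := hDb w hw
        _ ≤ c * 1 := mul_le_mul_of_nonneg_left h1 hc0
        _ = c := mul_one c
    set M := sSup S with hM
    have hM0 : 0 ≤ M := le_csSup hSbdd hS0
    have hub : ∀ w ∈ DsharpG F zb, ‖snd2 w‖ ≤ 1 → ‖fst2 w‖ ≤ M := fun w hw h1 =>
      le_csSup hSbdd ⟨w, hw, h1, rfl⟩
    haveI hNB : (𝓝[gph F] zb).NeBot := mem_closure_iff_nhdsWithin_neBot.mp (subset_closure hzb)
    have hcob : (𝓝[gph F] zb).IsCoboundedUnder (· ≤ ·) (fun z => subregMod F z) :=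
      isCoboundedUnder_le_of_eventually_le _ (Eventually.of_forall fun z => subregMod_nonneg F z)
    have hevb : ∀ ε > (0:ℝ), ∀ᶠ z in 𝓝[gph F] zb, subregMod F z ≤ M + 2*ε := by
      intro ε hε
      obtain ⟨δ, hδ, hcore⟩ := bwd_core H hM0 hub hε
      have h1 : ∀ᶠ z in 𝓝[gph F] zb, dist z zb < δ :=
        nhdsWithin_le_nhds (Metric.ball_mem_nhds zb hδ)
      have h2 : ∀ᶠ z in 𝓝[gph F] zb, z ∈ gph F := eventually_mem_nhdsWithin
      filter_upwards [h1, h2] with z hz1 hz2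
      exact (hcore z hz2 hz1).2
    -- upper bound
    have hle : lsubreg F zb ≤ M := by
      refine le_of_forall_gt_imp_ge_of_dense fun ρ hρ => ?_
      have hε : (0:ℝ) < (ρ - M)/2 := by linarith
      have hev := hevb _ hε
      have hev' : ∀ᶠ z in 𝓝[gph F] zb, subregMod F z ≤ ρ := by
        filter_upwards [hev] with z h; linarith
      exact limsup_le_of_le hcob hev'
    -- lower bound
    have hge : M ≤ lsubreg F zb := by
      refine csSup_le ⟨0, hS0⟩ ?_
      rintro r ⟨w, hw, hsw, rfl⟩
      obtain ⟨zk, wk, hk, hz, hwk⟩ := hw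
      set g : ℕ → ℝ := fun k => subregMod F (zk k) with hg
      obtain ⟨δ₁, hδ₁, hcore₁⟩ := bwd_core H hM0 hub one_pos
      have hzev : ∀ᶠ k in atTop, dist (zk k) zb < δ₁ := hz (Metric.ball_mem_nhds zb hδ₁)
      have hgb : IsBoundedUnder (· ≤ ·) atTop g := by
        refine ⟨M + 2*1, eventually_map.mpr ?_⟩
        filter_upwards [hzev] with k hk1
        exact (hcore₁ (zk k) (hk k).1 hk1).2
      set B := limsup g atTop with hB
      have hB0 : 0 ≤ B := le_limsup_of_frequently_le
        (Frequently.of_forall fun k => subregMod_nonneg F (zk k)) hgb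
      have hstep : ‖fst2 w‖ ≤ B := by
        refine le_of_forall_gt_imp_ge_of_dense fun ρ hρ => ?_
        have hmid : B < (B+ρ)/2 := by linarith
        have hev2 : ∀ᶠ k in atTop, g k < (B+ρ)/2 := eventually_lt_of_limsup_lt hmid hgb
        have hev3 : ∀ᶠ k in atTop, ‖fst2 (wk k)‖ ≤ ρ * ‖snd2 (wk k)‖ := by
          filter_upwards [hzev, hev2] with k h1 h2
          obtain ⟨hsub, hiso⟩ := (hcore₁ (zk k) (hk k).1 h1).1
          obtain ⟨κ₀, hκ₀⟩ := hsub
          obtain ⟨κ, hκT, hκlt⟩ := Real.lt_sInf_add_pos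
            (⟨κ₀, hκ₀⟩ : Set.Nonempty {κ | 0 ≤ κ ∧ SubregWith F (zk k) κ})
            (show (0:ℝ) < (ρ - B)/2 by linarith)
          have hκρ : κ ≤ ρ := by
            have he : sInf {κ | 0 ≤ κ ∧ SubregWith F (zk k) κ} = g k := rfl
            rw [he] at hκlt
            linarith
          calc ‖fst2 (wk k)‖ ≤ κ * ‖snd2 (wk k)‖ := lemC hκT.1 hκT.2 hiso (hk k).2
            _ ≤ ρ * ‖snd2 (wk k)‖ := mul_le_mul_of_nonneg_right hκρ (norm_nonneg _)
        have hlim := le_of_tendsto_of_tendsto (tendsto_norm_fst2 hwk)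
          ((tendsto_norm_snd2 hwk).const_mul ρ) hev3
        have hρ0 : 0 ≤ ρ := le_trans hB0 hρ.le
        calc ‖fst2 w‖ ≤ ρ * ‖snd2 w‖ := hlim
          _ ≤ ρ * 1 := mul_le_mul_of_nonneg_left hsw hρ0
          _ = ρ := mul_one ρ
      refine le_trans hstep ?_
      have hmaple : Filter.map zk atTop ≤ 𝓝[gph F] zb :=
        tendsto_nhdsWithin_iff.mpr ⟨hz, Eventually.of_forall fun k => (hk k).1⟩
      haveI : (Filter.map zk atTop).NeBot := Filter.map_neBot
      have hmm : limsup (fun z => subregMod F z) (Filter.map zk atTop) = B := by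
        rw [hB, Filter.limsup_eq, Filter.limsup_eq]
        congr 1
      rw [← hmm]
      refine limsup_le_limsup_of_le hmaple ?_ ?_
      · exact isCoboundedUnder_le_of_eventually_le _
          (Eventually.of_forall fun z => subregMod_nonneg F z)
      · exact ⟨M + 2*1, eventually_map.mpr
          (by filter_upwards [hevb 1 one_pos] with z h; exact h)⟩
    linarith


end SCD
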